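/- arXiv:1611.07016 — 2 statements merged into one kernel-verified Lean document; each statement's English description precedes it below -/
import Mathlib

section
/- Let N1, N2, k1, k2 be positive reals, and set dp1 = (N1/2)*k1, dq1 = N1/(2*k1), dp2 = (N2/2)*k2, dq2 = N2/(2*k2). If N1/2 + N2/2 = sqrt((dp1 + dp2)*(dq1 + dq2)), then k1 = k2. -/
theorem stmt5 (N1 N2 k1 k2 : ℝ) (hN1 : 0 < N1) (hN2 : 0 < N2)
    (hk1 : 0 < k1) (hk2 : 0 < k2)
    (dp1 dq1 dp2 dq2 : ℝ)
    (hdp1 : dp1 = (N1 / 2) * k1) (hdq1 : dq1 = N1 / (2 * k1))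
    (hdp2 : dp2 = (N2 / 2) * k2) (hdq2 : dq2 = N2 / (2 * k2))
    (hadd : N1 / 2 + N2 / 2 = Real.sqrt ((dp1 + dp2) * (dq1 + dq2))) :
    k1 = k2 := by
  have hnn : 0 ≤ (dp1 + dp2) * (dq1 + dq2) := by
    subst hdp1 hdq1 hdp2 hdq2
    positivity
  have hsq : (N1 / 2 + N2 / 2) ^ 2 = (dp1 + dp2) * (dq1 + dq2) := by
    rw [hadd, Real.sq_sqrt hnn]
  subst hdp1 hdq1 hdp2 hdq2
  have h1 : k1 ≠ 0 := ne_of_gt hk1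
  have h2 : k2 ≠ 0 := ne_of_gt hk2
  field_simp at hsq
  have hkey : N1 * N2 * (k1 - k2) ^ 2 = 0 := by nlinarith [hsq]
  have := mul_eq_zero.mp hkey
  rcases this with h | h
  · nlinarith
  · have : k1 - k2 = 0 := by
      exact pow_eq_zero_iff (n := 2) (by norm_num) |>.mp h
    linarith
end

section
/- Let N_A, N_B be positive reals and k_A, k_B > 0 satisfy both (N_A+1)/2 * k_A = N_B/2 * k_B and (N_A/2)*(1/k_A) = ((N_B+1)/2)*(1/k_B). Define k_A' = ((N_A+1)/N_A) k_A, k_B' = (N_B/(N_B+1)) k_B, and for each particle X define E_X = k_X + 1/k_X and P_X = k_X - 1/k_X (similarly with primes). Then E_A' + E_B' = E_A + E_B and P_A' + P_B' = P_A + P_B. -/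
theorem stmt16 (NA NB kA kB : ℝ) (hNA : 0 < NA) (hNB : 0 < NB)
    (hkA : 0 < kA) (hkB : 0 < kB)
    (hcon1 : (NA + 1) / 2 * kA = NB / 2 * kB)
    (hcon2 : (NA / 2) * (1 / kA) = ((NB + 1) / 2) * (1 / kB))
    (kA' kB' : ℝ) (hkA' : kA' = ((NA + 1) / NA) * kA)
    (hkB' : kB' = (NB / (NB + 1)) * kB) :
    (kA' + 1 / kA') + (kB' + 1 / kB') = (kA + 1 / kA) + (kB + 1 / kB) ∧
    (kA' - 1 / kA') + (kB' - 1 / kB') = (kA - 1 / kA) + (kB - 1 / kB) := by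
  have hNA0 : NA ≠ 0 := ne_of_gt hNA
  have hNB1 : (NB : ℝ) + 1 ≠ 0 := by positivity
  have hkAne : kA ≠ 0 := ne_of_gt hkA
  have hkBne : kB ≠ 0 := ne_of_gt hkB
  have hc1 : (NA + 1) * kA = NB * kB := by linarith
  have hc2 : NA * kB = (NB + 1) * kA := by
    field_simp at hcon2
    linarith
  have hmul : NA * (NA + 1) * (kA * kB) = NB * (NB + 1) * (kA * kB) := by
    linear_combination (NA * kB) * hc1 + (NB * kB) * hc2
  have hNN : NA * (NA + 1) = NB * (NB + 1) := by
    have hkk : kA * kB ≠ 0 := mul_ne_zero hkAne hkBne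
    exact mul_right_cancel₀ hkk hmul
  have hAB : NA = NB := by nlinarith [hNN]
  subst hAB
  have hA' : kA' = kB := by
    rw [hkA']
    field_simp
    linarith [hc1]
  have hB' : kB' = kA := by
    rw [hkB']
    field_simp
    linarith [hc2]
  subst hA' hB'
  constructor <;> ring
end
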